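/- If 0 < w_D < ∞, then lim_{y↓0} (E[U(H(·),·)] − v(y))/y = w_D. -/

import Mathlib

open MeasureTheory Set Filter
open scoped ENNReal NNReal Topology

/-- The convex dual `Ũ(y) := sup_{0 ≤ z ≤ H} (U(z) − y·z)` (for a fixed state). -/
noncomputable def dualU (U : ℝ → ℝ) (H y : ℝ) : ℝ :=
  sSup ((fun z => U z - y * z) '' Set.Icc 0 H)

/-- `min(I(y), H)`, where `I(y) := inf{ z ∈ (0,H) : U'(z) < y }` with the
conventions `inf ∅ = +∞` and `I(0) = +∞` (so that the minimum with `H`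
equals `H` in those cases). -/
noncomputable def IminU (U : ℝ → ℝ) (H y : ℝ) : ℝ :=
  sInf ({z | z ∈ Set.Ioo 0 H ∧ deriv U z < y} ∪ {H})

/-- The dual value function `v(y) := inf_{ξ ∈ D} E[Ũ(y·ξ(·), ·)]`. -/
noncomputable def dualValue {Ω : Type*} [MeasurableSpace Ω] (μ : Measure Ω)
    (U : Ω → ℝ → ℝ) (H : Ω → ℝ) (D : Set (Ω → ℝ)) (y : ℝ) : ℝ :=
  sInf ((fun ξ => ∫ ω, dualU (U ω) (H ω) (y * ξ ω) ∂μ) '' D)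

/-- `w_D := sup_{ξ ∈ D} E[ξ·H]` (as an extended nonnegative real). -/
noncomputable def wDual {Ω : Type*} [MeasurableSpace Ω] (μ : Measure Ω)
    (H : Ω → ℝ) (D : Set (Ω → ℝ)) : ℝ≥0∞ :=
  ⨆ ξ ∈ D, ∫⁻ ω, ENNReal.ofReal (ξ ω * H ω) ∂μ

section pointwise
variable {U : ℝ → ℝ} {H : ℝ}

lemma dualU_bddAbove (hH : 0 ≤ H) (hUmono : MonotoneOn U (Set.Ici 0)) {y : ℝ} (hy : 0 ≤ y) :
    ∀ z ∈ Set.Icc 0 H, U z - y * z ≤ U H := by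
  intro z hz
  have h1 : U z ≤ U H := hUmono hz.1 hH hz.2
  nlinarith [hz.1, hz.2]

lemma dualU_le (hH : 0 ≤ H) (hUmono : MonotoneOn U (Set.Ici 0)) {y : ℝ} (hy : 0 ≤ y) :
    dualU U H y ≤ U H :=
  csSup_le ((Set.nonempty_Icc.2 hH).image _)
    (by rintro _ ⟨z, hz, rfl⟩; exact dualU_bddAbove hH hUmono hy z hz)

lemma le_dualU (hH : 0 ≤ H) (hUmono : MonotoneOn U (Set.Ici 0)) {y : ℝ} (hy : 0 ≤ y) :
    U H - y * H ≤ dualU U H y :=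
  le_csSup ⟨U H, by rintro _ ⟨z, hz, rfl⟩; exact dualU_bddAbove hH hUmono hy z hz⟩
    ⟨H, Set.right_mem_Icc.2 hH, rfl⟩

lemma dualU_nonneg (hH : 0 ≤ H) (hUmono : MonotoneOn U (Set.Ici 0)) (hU0 : 0 ≤ U 0)
    {y : ℝ} (hy : 0 ≤ y) : 0 ≤ dualU U H y := by
  have := le_csSup ⟨U H, by rintro _ ⟨z, hz, rfl⟩; exact dualU_bddAbove hH hUmono hy z hz⟩
    (Set.mem_image_of_mem _ (Set.left_mem_Icc.2 hH))
  simpa [dualU] using le_trans (by simpa using hU0) this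

lemma dualU_zero (hH : 0 ≤ H) (hUmono : MonotoneOn U (Set.Ici 0)) :
    dualU U H 0 = U H :=
  le_antisymm (dualU_le hH hUmono le_rfl) (by simpa using le_dualU hH hUmono (le_refl 0))

lemma dualU_le_sub (hUmono : MonotoneOn U (Set.Ici 0)) {y z₀ : ℝ}
    (hz₀ : z₀ ∈ Set.Ioo 0 H) (hy : 0 ≤ y) (hsmall : y * z₀ ≤ U H - U z₀) :
    dualU U H y ≤ U H - y * z₀ := by
  have hH : 0 ≤ H := le_trans hz₀.1.le hz₀.2.le
  refine csSup_le ((Set.nonempty_Icc.2 hH).image _) ?_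
  rintro _ ⟨z, hz, rfl⟩
  show U z - y * z ≤ U H - y * z₀
  rcases le_total z z₀ with h | h
  · have h1 : U z ≤ U z₀ := hUmono hz.1 hz₀.1.le h
    nlinarith [mul_nonneg hy hz.1]
  · have h1 : U z ≤ U H := hUmono (le_trans hz₀.1.le h) hH hz.2
    nlinarith [mul_le_mul_of_nonneg_left h hy]

/-- strictly concave + monotone implies strictly below at interior pts -/
lemma U_lt_U_H (hH : 0 < H) (hUmono : MonotoneOn U (Set.Ici 0))
    (hUconc : StrictConcaveOn ℝ (Set.Ioo 0 H) U) {z₀ : ℝ} (hz₀ : z₀ ∈ Set.Ioo 0 H) :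
    U z₀ < U H := by
  by_contra hcon
  push_neg at hcon
  obtain ⟨hz0, hzH⟩ := hz₀
  obtain ⟨a, ha⟩ : ∃ a : ℝ, a = z₀ + (H - z₀)/3 := ⟨_, rfl⟩
  obtain ⟨b, hb⟩ : ∃ b : ℝ, b = z₀ + 2*(H - z₀)/3 := ⟨_, rfl⟩
  have haI : a ∈ Set.Ioo 0 H := ⟨by rw [ha]; linarith, by rw [ha]; linarith⟩
  have hbI : b ∈ Set.Ioo 0 H := ⟨by rw [hb]; linarith, by rw [hb]; linarith⟩
  have hab : a ≠ b := by rw [ha, hb]; intro h; nlinarith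
  have hkey := hUconc.2 haI hbI hab one_half_pos one_half_pos (by norm_num)
  rw [smul_eq_mul, smul_eq_mul, smul_eq_mul, smul_eq_mul] at hkey
  have hcomb : (1/2:ℝ)*a + (1/2:ℝ)*b = z₀ + (H - z₀)/2 := by rw [ha, hb]; ring
  rw [hcomb] at hkey
  have hUa : U z₀ ≤ U a := hUmono hz0.le haI.1.le (by rw [ha]; linarith)
  have hUb : U z₀ ≤ U b := hUmono hz0.le hbI.1.le (by rw [hb]; linarith)
  have hUm : U (z₀ + (H - z₀)/2) ≤ U H :=
    hUmono (by linarith : (0:ℝ) ≤ z₀ + (H - z₀)/2) hH.le (by linarith)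
  linarith

/-- the core limit -/
lemma dualU_tendsto (hH : 0 < H) (hUmono : MonotoneOn U (Set.Ici 0))
    (hUconc : StrictConcaveOn ℝ (Set.Ioo 0 H) U) :
    Tendsto (fun x => (U H - dualU U H x) / x) (nhdsWithin 0 (Set.Ioi 0)) (nhds H) := by
  rw [tendsto_order]
  constructor
  · intro a ha
    set z₀ := (max a (H/2) + H)/2 with hz₀def
    have hmaxlt : max a (H/2) < H := max_lt ha (by linarith)
    have hz₀I : z₀ ∈ Set.Ioo 0 H := by
      constructor
      · have : H/2 ≤ max a (H/2) := le_max_right _ _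
        simp only [hz₀def]; nlinarith
      · simp only [hz₀def]; linarith
    have haz : a < z₀ := by
      have : a ≤ max a (H/2) := le_max_left _ _
      simp only [hz₀def]; linarith
    have hUlt : U z₀ < U H := U_lt_U_H hH hUmono hUconc hz₀I
    set δ := (U H - U z₀)/z₀ with hδdef
    have hδpos : 0 < δ := div_pos (by linarith) hz₀I.1
    filter_upwards [Ioo_mem_nhdsGT_of_mem (Set.left_mem_Ico.2 hδpos)] with x hx
    have hxpos : 0 < x := hx.1
    have hsmall : x * z₀ ≤ U H - U z₀ := by
      rw [hδdef] at hx
      have := (lt_div_iff₀ hz₀I.1).1 hx.2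
      linarith
    have hle := dualU_le_sub hUmono hz₀I hxpos.le hsmall
    rw [lt_div_iff₀ hxpos]
    nlinarith
  · intro a ha
    filter_upwards [self_mem_nhdsWithin] with x hx
    have hxpos : (0:ℝ) < x := hx
    have := le_dualU hH.le hUmono hxpos.le
    rw [div_lt_iff₀ hxpos]
    nlinarith

/-- dualU as countable sup, for measurability -/
lemma dualU_eq_iSup (hH : 0 < H) (hUmono : MonotoneOn U (Set.Ici 0))
    (hUcont : ContinuousOn U (Set.Ici 0)) {c : ℝ} (hc : 0 ≤ c) :
    dualU U H c = ⨆ q : ℚ, (U (min (max (q:ℝ) 0) H) - c * min (max (q:ℝ) 0) H) := by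
  have hbdd := dualU_bddAbove hH.le hUmono hc
  have hmem : ∀ q : ℚ, min (max (q:ℝ) 0) H ∈ Set.Icc 0 H :=
    fun q => ⟨le_min (le_max_right _ _) hH.le, min_le_right _ _⟩
  have hrbdd : BddAbove (Set.range fun q : ℚ =>
      U (min (max (q:ℝ) 0) H) - c * min (max (q:ℝ) 0) H) := by
    refine ⟨U H, ?_⟩
    rintro _ ⟨q, rfl⟩
    exact hbdd _ (hmem q)
  apply le_antisymm
  · refine csSup_le ((Set.nonempty_Icc.2 hH.le).image _) ?_
    rintro _ ⟨z, hz, rfl⟩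
    show U z - c * z ≤ _
    refine le_of_forall_pos_le_add fun ε hε => ?_
    have hcont : ContinuousWithinAt (fun z => U z - c * z) (Set.Ici 0) z :=
      ((hUcont z hz.1).sub ((continuous_const.mul continuous_id).continuousWithinAt))
    rw [Metric.continuousWithinAt_iff] at hcont
    obtain ⟨δ, hδ, hball⟩ := hcont ε hε
    obtain ⟨q, hq1, hq2⟩ := exists_rat_btwn (show z - min δ 1 < z by
      have : (0:ℝ) < min δ 1 := lt_min hδ one_pos
      linarith)
    set w := min (max (q:ℝ) 0) H with hwdef
    have hqz : max (q:ℝ) 0 ≤ z := max_le hq2.le hz.1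
    have hw : w = max (q:ℝ) 0 := min_eq_left (le_trans hqz hz.2)
    have hwz : dist w z < δ := by
      rw [hw, Real.dist_eq, abs_lt]
      rcases le_total (0:ℝ) q with h | h
      · rw [max_eq_left (by exact_mod_cast h)]
        constructor
        · have : min δ 1 ≤ δ := min_le_left _ _
          linarith
        · linarith
      · rw [max_eq_right (by exact_mod_cast h)]
        have hqle : (q:ℝ) ≤ 0 := by exact_mod_cast h
        have : z < min δ 1 := by linarith
        have : z < δ := lt_of_lt_of_le this (min_le_left _ _)
        constructor <;> [linarith [hz.1]; linarith [hz.1]]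
    have hwIci : w ∈ Set.Ici (0:ℝ) := (hmem q).1
    have hdist := hball hwIci hwz
    rw [Real.dist_eq] at hdist
    have h1 : U z - c * z < (U w - c * w) + ε := by
      have := abs_lt.1 hdist
      linarith [this.1]
    have h2 : U w - c * w ≤ ⨆ q : ℚ, (U (min (max (q:ℝ) 0) H) - c * min (max (q:ℝ) 0) H) :=
      le_ciSup hrbdd q
    linarith
  · refine ciSup_le fun q => ?_
    refine le_csSup ⟨U H, ?_⟩ ⟨_, hmem q, rfl⟩
    rintro _ ⟨z, hz, rfl⟩
    exact hbdd _ hz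

end pointwise

section meas
variable {Ω : Type*} [MeasurableSpace Ω] {U : Ω → ℝ → ℝ} {H : Ω → ℝ}

lemma meas_comp_countable {g : Ω → ℝ} (hg : Measurable g) (hcr : (Set.range g).Countable)
    (hU : ∀ z, Measurable fun ω => U ω z) : Measurable fun ω => U ω (g ω) := by
  intro B hB
  have heq : (fun ω => U ω (g ω)) ⁻¹' B =
      ⋃ s ∈ Set.range g, (g ⁻¹' {s}) ∩ {ω | U ω s ∈ B} := by
    ext ω
    simp only [Set.mem_preimage, Set.mem_iUnion, Set.mem_inter_iff, Set.mem_setOf_eq,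
      Set.mem_singleton_iff, Set.mem_range, exists_prop]
    constructor
    · intro h
      exact ⟨g ω, ⟨ω, rfl⟩, rfl, h⟩
    · rintro ⟨s, _, rfl, h⟩
      exact h
  rw [heq]
  exact MeasurableSet.biUnion hcr fun s _ =>
    (hg (measurableSet_singleton s)).inter (hU s hB)

lemma meas_comp (hUcont : ∀ ω, ContinuousOn (U ω) (Set.Ici 0))
    (hUmeas : ∀ z, Measurable fun ω => U ω z)
    {a : Ω → ℝ} (ha : Measurable a) (ha0 : ∀ ω, 0 ≤ a ω) :
    Measurable fun ω => U ω (a ω) := by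
  have hgmeas : ∀ n : ℕ, Measurable fun ω => ((⌈a ω * 2 ^ n⌉ : ℤ) : ℝ) / 2 ^ n := by
    intro n
    exact ((measurable_from_top.comp ((ha.mul_const _).ceil)).div_const _)
  have hgcnt : ∀ n : ℕ, (Set.range fun ω => ((⌈a ω * 2 ^ n⌉ : ℤ) : ℝ) / 2 ^ n).Countable := by
    intro n
    have : (Set.range fun ω => ((⌈a ω * 2 ^ n⌉ : ℤ) : ℝ) / 2 ^ n) ⊆
        Set.range fun k : ℤ => (k : ℝ) / 2 ^ n := by
      rintro _ ⟨ω, rfl⟩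
      exact ⟨⌈a ω * 2 ^ n⌉, rfl⟩
    exact (Set.countable_range _).mono this
  have hn : ∀ n : ℕ, Measurable fun ω => U ω (((⌈a ω * 2 ^ n⌉ : ℤ) : ℝ) / 2 ^ n) :=
    fun n => meas_comp_countable (hgmeas n) (hgcnt n) hUmeas
  apply measurable_of_tendsto_metrizable hn
  rw [tendsto_pi_nhds]
  intro ω
  have hpow : ∀ n : ℕ, (0:ℝ) < 2 ^ n := fun n => by positivity
  have hub : ∀ n : ℕ, ((⌈a ω * 2 ^ n⌉ : ℤ) : ℝ) / 2 ^ n ≤ a ω + (1/2) ^ n := by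
    intro n
    rw [div_le_iff₀ (hpow n)]
    have := Int.ceil_lt_add_one (a ω * 2 ^ n)
    have h2 : ((1:ℝ)/2) ^ n * 2 ^ n = 1 := by
      rw [← mul_pow]; norm_num
    nlinarith
  have hlb : ∀ n : ℕ, a ω ≤ ((⌈a ω * 2 ^ n⌉ : ℤ) : ℝ) / 2 ^ n := by
    intro n
    rw [le_div_iff₀ (hpow n)]
    exact Int.le_ceil _
  have htend : Tendsto (fun n : ℕ => ((⌈a ω * 2 ^ n⌉ : ℤ) : ℝ) / 2 ^ n) atTop (nhds (a ω)) := by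
    have h1 : Tendsto (fun n : ℕ => a ω + (1/2:ℝ) ^ n) atTop (nhds (a ω)) := by
      have := tendsto_pow_atTop_nhds_zero_of_lt_one (by norm_num : (0:ℝ) ≤ 1/2)
        (by norm_num : (1/2:ℝ) < 1)
      simpa using tendsto_const_nhds.add this
    exact tendsto_of_tendsto_of_tendsto_of_le_of_le tendsto_const_nhds h1 hlb hub
  have htendw : Tendsto (fun n : ℕ => ((⌈a ω * 2 ^ n⌉ : ℤ) : ℝ) / 2 ^ n) atTop
      (nhdsWithin (a ω) (Set.Ici 0)) := by
    rw [tendsto_nhdsWithin_iff]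
    exact ⟨htend, Filter.Eventually.of_forall fun n => le_trans (ha0 ω) (hlb n)⟩
  exact ((hUcont ω) (a ω) (ha0 ω)).tendsto.comp htendw

lemma dualU_measurable (hHmeas : Measurable H) (hHpos : ∀ ω, 0 < H ω)
    (hUmono : ∀ ω, MonotoneOn (U ω) (Set.Ici 0))
    (hUcont : ∀ ω, ContinuousOn (U ω) (Set.Ici 0))
    (hUmeas : ∀ z, Measurable fun ω => U ω z)
    {c : Ω → ℝ} (hc : Measurable c) (hc0 : ∀ ω, 0 ≤ c ω) :
    Measurable fun ω => dualU (U ω) (H ω) (c ω) := by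
  have heq : (fun ω => dualU (U ω) (H ω) (c ω)) = fun ω =>
      ⨆ q : ℚ, (U ω (min (max (q:ℝ) 0) (H ω)) - c ω * min (max (q:ℝ) 0) (H ω)) :=
    funext fun ω => dualU_eq_iSup (hHpos ω) (hUmono ω) (hUcont ω) (hc0 ω)
  rw [heq]
  refine Measurable.iSup fun q => Measurable.sub ?_ ?_
  · exact meas_comp hUcont hUmeas (measurable_const.min hHmeas)
      (fun ω => le_min (le_max_right _ _) (hHpos ω).le)
  · exact hc.mul (measurable_const.min hHmeas)

end meas


/-- If `0 < w_D < ∞`, then `lim_{y↓0} (E[U(H(·),·)] − v(y))/y = w_D`. -/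
theorem stmt8 {Ω : Type*} [MeasurableSpace Ω] (μ : Measure Ω) [IsProbabilityMeasure μ]
    (H : Ω → ℝ) (hHmeas : Measurable H) (hHpos : ∀ ω, 0 < H ω)
    (U : Ω → ℝ → ℝ)
    (hU0 : ∀ ω, ∀ z, 0 ≤ z → 0 ≤ U ω z)
    (hUmono : ∀ ω, MonotoneOn (U ω) (Set.Ici 0))
    (hUcont : ∀ ω, ContinuousOn (U ω) (Set.Ici 0))
    (hUconc : ∀ ω, StrictConcaveOn ℝ (Set.Ioo 0 (H ω)) (U ω))
    (hUdiff : ∀ ω, ∀ z ∈ Set.Ioo 0 (H ω), DifferentiableAt ℝ (U ω) z)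
    (hUcap : ∀ ω, ∀ w, 0 ≤ w → U ω w = U ω (min w (H ω)))
    (hUmeas : ∀ z, Measurable fun ω => U ω z)
    (hUint : Integrable (fun ω => U ω (H ω)) μ)
    (D : Set (Ω → ℝ)) (hDne : D.Nonempty)
    (hDmeas : ∀ ξ ∈ D, Measurable ξ)
    (hDpos : ∀ ξ ∈ D, ∀ ω, 0 ≤ ξ ω)
    (hw0 : 0 < wDual μ H D) (hwtop : wDual μ H D < ⊤) :
    Tendsto (fun y => ((∫ ω, U ω (H ω) ∂μ) - dualValue μ U H D y) / y)
      (nhdsWithin 0 (Set.Ioi 0)) (nhds (wDual μ H D).toReal) := by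
  have hUHmeas : Measurable fun ω => U ω (H ω) :=
    meas_comp hUcont hUmeas hHmeas fun ω => (hHpos ω).le
  set A := ∫ ω, U ω (H ω) ∂μ with hA
  set W := (wDual μ H D).toReal with hW
  -- facts about ξ ∈ D
  have hL : ∀ ξ ∈ D, (∫⁻ ω, ENNReal.ofReal (ξ ω * H ω) ∂μ) ≤ wDual μ H D := by
    intro ξ hξ
    have h : (∫⁻ ω, ENNReal.ofReal (ξ ω * H ω) ∂μ) ≤
        ⨆ ξ ∈ D, ∫⁻ ω, ENNReal.ofReal (ξ ω * H ω) ∂μ :=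
      le_iSup₂ (f := fun (ξ : Ω → ℝ) (_ : ξ ∈ D) => ∫⁻ ω, ENNReal.ofReal (ξ ω * H ω) ∂μ) ξ hξ
    exact h
  have hXiH_meas : ∀ ξ ∈ D, Measurable fun ω => ξ ω * H ω :=
    fun ξ hξ => (hDmeas ξ hξ).mul hHmeas
  have hXiH_int : ∀ ξ ∈ D, Integrable (fun ω => ξ ω * H ω) μ := by
    intro ξ hξ
    refine ⟨(hXiH_meas ξ hξ).aestronglyMeasurable, ?_⟩
    have heq : ∀ ω, ‖ξ ω * H ω‖ₑ = ENNReal.ofReal (ξ ω * H ω) :=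
      fun ω => Real.enorm_eq_ofReal (mul_nonneg (hDpos ξ hξ ω) (hHpos ω).le)
    rw [HasFiniteIntegral]
    simp only [heq]
    exact lt_of_le_of_lt (hL ξ hξ) hwtop
  have hXiH_eq : ∀ ξ ∈ D, ∫ ω, ξ ω * H ω ∂μ =
      (∫⁻ ω, ENNReal.ofReal (ξ ω * H ω) ∂μ).toReal := by
    intro ξ hξ
    exact integral_eq_lintegral_of_nonneg_ae
      (Filter.Eventually.of_forall fun ω => mul_nonneg (hDpos ξ hξ ω) (hHpos ω).le)
      (hXiH_meas ξ hξ).aestronglyMeasurable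
  have hXiH_le_W : ∀ ξ ∈ D, ∫ ω, ξ ω * H ω ∂μ ≤ W := by
    intro ξ hξ
    rw [hXiH_eq ξ hξ]
    exact ENNReal.toReal_mono hwtop.ne (hL ξ hξ)
  -- facts about the dual integrand
  have hGmeas : ∀ y : ℝ, 0 ≤ y → ∀ ξ ∈ D,
      Measurable fun ω => dualU (U ω) (H ω) (y * ξ ω) := by
    intro y hy ξ hξ
    exact dualU_measurable hHmeas hHpos hUmono hUcont hUmeas
      (measurable_const.mul (hDmeas ξ hξ))
      (fun ω => mul_nonneg hy (hDpos ξ hξ ω))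
  have hGlb : ∀ y : ℝ, 0 ≤ y → ∀ ξ ∈ D, ∀ ω,
      U ω (H ω) - y * ξ ω * H ω ≤ dualU (U ω) (H ω) (y * ξ ω) := by
    intro y hy ξ hξ ω
    have := le_dualU (hHpos ω).le (hUmono ω) (mul_nonneg hy (hDpos ξ hξ ω))
    linarith
  have hGub : ∀ y : ℝ, 0 ≤ y → ∀ ξ ∈ D, ∀ ω,
      dualU (U ω) (H ω) (y * ξ ω) ≤ U ω (H ω) :=
    fun y hy ξ hξ ω => dualU_le (hHpos ω).le (hUmono ω) (mul_nonneg hy (hDpos ξ hξ ω))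
  have hGnn : ∀ y : ℝ, 0 ≤ y → ∀ ξ ∈ D, ∀ ω,
      0 ≤ dualU (U ω) (H ω) (y * ξ ω) :=
    fun y hy ξ hξ ω => dualU_nonneg (hHpos ω).le (hUmono ω) (hU0 ω 0 le_rfl)
      (mul_nonneg hy (hDpos ξ hξ ω))
  have hGint : ∀ y : ℝ, 0 ≤ y → ∀ ξ ∈ D,
      Integrable (fun ω => dualU (U ω) (H ω) (y * ξ ω)) μ := by
    intro y hy ξ hξ
    refine hUint.mono' (hGmeas y hy ξ hξ).aestronglyMeasurable ?_
    refine Filter.Eventually.of_forall fun ω => ?_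
    rw [Real.norm_eq_abs, abs_of_nonneg (hGnn y hy ξ hξ ω)]
    exact hGub y hy ξ hξ ω
  have hGint_lb : ∀ y : ℝ, 0 ≤ y → ∀ ξ ∈ D,
      A - y * ∫ ω, ξ ω * H ω ∂μ ≤ ∫ ω, dualU (U ω) (H ω) (y * ξ ω) ∂μ := by
    intro y hy ξ hξ
    have h1 : ∫ ω, (U ω (H ω) - y * (ξ ω * H ω)) ∂μ ≤
        ∫ ω, dualU (U ω) (H ω) (y * ξ ω) ∂μ := by
      refine integral_mono (hUint.sub ((hXiH_int ξ hξ).const_mul y)) (hGint y hy ξ hξ) ?_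
      intro ω
      have := hGlb y hy ξ hξ ω
      simp only [Pi.sub_apply]
      linarith [this]
    rw [integral_sub hUint ((hXiH_int ξ hξ).const_mul y), integral_const_mul] at h1
    exact h1
  have hGint_ub : ∀ y : ℝ, 0 ≤ y → ∀ ξ ∈ D,
      ∫ ω, dualU (U ω) (H ω) (y * ξ ω) ∂μ ≤ A := by
    intro y hy ξ hξ
    exact integral_mono (hGint y hy ξ hξ) hUint (fun ω => hGub y hy ξ hξ ω)
  -- bounds on the dual value function
  have hvbddBelow : ∀ y : ℝ, 0 ≤ y →
      ∀ x ∈ (fun ξ => ∫ ω, dualU (U ω) (H ω) (y * ξ ω) ∂μ) '' D, A - y * W ≤ x := by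
    rintro y hy _ ⟨ξ, hξ, rfl⟩
    have h1 := hGint_lb y hy ξ hξ
    have h2 : y * ∫ ω, ξ ω * H ω ∂μ ≤ y * W :=
      mul_le_mul_of_nonneg_left (hXiH_le_W ξ hξ) hy
    linarith
  have hvge : ∀ y : ℝ, 0 ≤ y → A - y * W ≤ dualValue μ U H D y := by
    intro y hy
    exact le_csInf (hDne.image _) (hvbddBelow y hy)
  have hvle : ∀ y : ℝ, 0 ≤ y → ∀ ξ ∈ D,
      dualValue μ U H D y ≤ ∫ ω, dualU (U ω) (H ω) (y * ξ ω) ∂μ := by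
    intro y hy ξ hξ
    exact csInf_le ⟨A - y * W, hvbddBelow y hy⟩ ⟨ξ, hξ, rfl⟩
  have hfup : ∀ y : ℝ, 0 < y → (A - dualValue μ U H D y) / y ≤ W := by
    intro y hy
    rw [div_le_iff₀ hy]
    have := hvge y hy.le
    nlinarith
  -- main argument
  rw [Metric.tendsto_nhds]
  intro ε hε
  -- choose a near-optimal ξ
  have hsub : wDual μ H D - ENNReal.ofReal (ε/2) < wDual μ H D :=
    ENNReal.sub_lt_self hwtop.ne hw0.ne'
      (by simp [ENNReal.ofReal_pos]; linarith)
  have hsub2 : wDual μ H D - ENNReal.ofReal (ε/2) <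
      ⨆ ξ ∈ D, ∫⁻ ω, ENNReal.ofReal (ξ ω * H ω) ∂μ := hsub
  rw [lt_iSup_iff] at hsub2
  obtain ⟨ξ, hsub3⟩ := hsub2
  rw [lt_iSup_iff] at hsub3
  obtain ⟨hξD, hgt⟩ := hsub3
  have hξint : ∫ ω, ξ ω * H ω ∂μ ≥ W - ε/2 := by
    by_cases hc : ENNReal.ofReal (ε/2) ≤ wDual μ H D
    · have h1 : (wDual μ H D - ENNReal.ofReal (ε/2)).toReal = W - ε/2 := by
        rw [ENNReal.toReal_sub_of_le hc hwtop.ne, ENNReal.toReal_ofReal (by linarith)]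
      have h2 : (wDual μ H D - ENNReal.ofReal (ε/2)).toReal ≤
          (∫⁻ ω, ENNReal.ofReal (ξ ω * H ω) ∂μ).toReal :=
        ENNReal.toReal_mono (ne_top_of_le_ne_top hwtop.ne (hL ξ hξD)) hgt.le
      rw [hXiH_eq ξ hξD]
      linarith
    · push_neg at hc
      have h1 : W ≤ ε/2 := by
        have := ENNReal.toReal_mono (by simp) hc.le
        rw [ENNReal.toReal_ofReal (by linarith)] at this
        exact this
      have h2 : 0 ≤ ∫ ω, ξ ω * H ω ∂μ :=
        integral_nonneg fun ω => mul_nonneg (hDpos ξ hξD ω) (hHpos ω).le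
      linarith
  -- dominated convergence
  have hDCT : Tendsto (fun y => ∫ ω, (U ω (H ω) - dualU (U ω) (H ω) (y * ξ ω)) / y ∂μ)
      (nhdsWithin 0 (Set.Ioi 0)) (nhds (∫ ω, ξ ω * H ω ∂μ)) := by
    refine tendsto_integral_filter_of_dominated_convergence (fun ω => ξ ω * H ω) ?_ ?_
      (hXiH_int ξ hξD) ?_
    · filter_upwards [self_mem_nhdsWithin] with y hy
      exact ((hUHmeas.sub (hGmeas y (le_of_lt hy) ξ hξD)).div_const y).aestronglyMeasurable
    · filter_upwards [self_mem_nhdsWithin] with y hy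
      refine Filter.Eventually.of_forall fun ω => ?_
      have hypos : (0:ℝ) < y := hy
      have h1 := hGlb y hypos.le ξ hξD ω
      have h2 := hGub y hypos.le ξ hξD ω
      rw [Real.norm_eq_abs, abs_of_nonneg (div_nonneg (by linarith) hypos.le)]
      rw [div_le_iff₀ hypos]
      nlinarith
    · refine Filter.Eventually.of_forall fun ω => ?_
      by_cases hξω : ξ ω = 0
      · have hfun : (fun y : ℝ => (U ω (H ω) - dualU (U ω) (H ω) (y * ξ ω)) / y) =
            fun _ => 0 := by
          funext y
          rw [hξω, mul_zero, dualU_zero (hHpos ω).le (hUmono ω), sub_self, zero_div]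
        rw [hfun, hξω, zero_mul]
        exact tendsto_const_nhds
      · have hpos : 0 < ξ ω := lt_of_le_of_ne (hDpos ξ hξD ω) (Ne.symm hξω)
        have hmap : Tendsto (fun y : ℝ => y * ξ ω) (nhdsWithin 0 (Set.Ioi 0))
            (nhdsWithin 0 (Set.Ioi 0)) := by
          rw [tendsto_nhdsWithin_iff]
          constructor
          · have h0 : Tendsto (fun y : ℝ => y * ξ ω) (nhds 0) (nhds 0) := by
              have := (tendsto_id (x := nhds (0:ℝ))).mul_const (ξ ω)
              simpa using this
            exact h0.mono_left nhdsWithin_le_nhds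
          · filter_upwards [self_mem_nhdsWithin] with y hy
            exact mul_pos hy hpos
        have hcomp := ((dualU_tendsto (hHpos ω) (hUmono ω) (hUconc ω)).comp hmap).const_mul (ξ ω)
        have heq : ∀ᶠ y in nhdsWithin (0:ℝ) (Set.Ioi 0),
            ξ ω * ((U ω (H ω) - dualU (U ω) (H ω) (y * ξ ω)) / (y * ξ ω)) =
            (U ω (H ω) - dualU (U ω) (H ω) (y * ξ ω)) / y := by
          filter_upwards [self_mem_nhdsWithin] with y hy
          have hypos : (0:ℝ) < y := hy
          field_simp
        exact hcomp.congr' heq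
  have hev := hDCT.eventually (eventually_gt_nhds
    (show (∫ ω, ξ ω * H ω ∂μ) - ε/2 < ∫ ω, ξ ω * H ω ∂μ by linarith))
  filter_upwards [hev, self_mem_nhdsWithin] with y h1 hy
  have hypos : (0:ℝ) < y := hy
  have hup := hfup y hypos
  have hlow : (A - dualValue μ U H D y) / y ≥
      ∫ ω, (U ω (H ω) - dualU (U ω) (H ω) (y * ξ ω)) / y ∂μ := by
    have hle := hvle y hypos.le ξ hξD
    have heqint : ∫ ω, (U ω (H ω) - dualU (U ω) (H ω) (y * ξ ω)) / y ∂μ =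
        (A - ∫ ω, dualU (U ω) (H ω) (y * ξ ω) ∂μ) / y := by
      rw [integral_div, integral_sub hUint (hGint y hypos.le ξ hξD), hA]
    rw [heqint]
    exact (div_le_div_iff_of_pos_right hypos).2 (by linarith)
  rw [Real.dist_eq, abs_lt]
  constructor
  · linarith
  · linarith
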